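/- For finite groups A and B with A abelian, the minimal number of generators of the regular wreath product satisfies d(A ≀ B) = d(A) + d(B) when A and B are p-groups. -/

import Mathlib

open scoped Pointwise

/-- The right-translation action of `B` on `B → A`: `(b • f) x = f (x * b)`. -/
def wreathAction (A B : Type) [Group A] [Group B] : B →* MulAut (B → A) where
  toFun b :=
    { toFun := fun f x => f (x * b)
      invFun := fun f x => f (x * b⁻¹)
      left_inv := fun f => by funext x; simp [mul_assoc]
      right_inv := fun f => by funext x; simp [mul_assoc]
      map_mul' := fun f g => rfl }
  map_one' := by
    apply MulEquiv.ext; intro f; funext x; simp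
  map_mul' := fun b₁ b₂ => by
    apply MulEquiv.ext; intro f; funext x; simp [mul_assoc]

/-- The regular wreath product `A ≀ B`: pairs `(f, b)` with `f : B → A`, `b : B`,
with multiplication `(f₁, b₁)(f₂, b₂) = (f₁ · f₂^{b₁⁻¹}, b₁ b₂)` where
`f₂^{b₁⁻¹}(x) = f₂ (x b₁)`. -/
abbrev Wreath (A B : Type) [Group A] [Group B] : Type :=
  (B → A) ⋊[wreathAction A B] B

instance {N H : Type} [Group N] [Group H] (φ : H →* MulAut N) [Finite N] [Finite H] :
    Finite (N ⋊[φ] H) :=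
  Finite.of_injective (fun x => (x.left, x.right)) (fun a b h => by
    cases a; cases b
    simpa [SemidirectProduct.ext_iff, Prod.ext_iff] using h)

section Aux

open Subgroup

/-- Lift a generating set through a quotient. -/
lemma RankWreathAux.exists_finset_closure_sup (G : Type*) [Group G] (N : Subgroup G) [N.Normal]
    [Group.FG (G ⧸ N)] :
    ∃ S : Finset G, S.card ≤ Group.rank (G ⧸ N) ∧
      Subgroup.closure (S : Set G) ⊔ N = ⊤ := by
  classical
  obtain ⟨T, hTcard, hTtop⟩ := Group.rank_spec (G ⧸ N)
  have hsurj : Function.Surjective (QuotientGroup.mk' N) := QuotientGroup.mk'_surjective N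
  set σ : (G ⧸ N) → G := Function.surjInv hsurj with hσ
  refine ⟨T.image σ, Finset.card_image_le.trans hTcard.le, ?_⟩
  have himg : (QuotientGroup.mk' N) '' ((T.image σ : Finset G) : Set G) = (T : Set (G ⧸ N)) := by
    ext x
    simp only [Finset.coe_image, Set.image_image, Function.surjInv_eq hsurj, Set.image_id']
    exact ⟨fun ⟨y, hy, h⟩ => ((Function.surjInv_eq hsurj y).symm.trans h : y = x) ▸ hy,
      fun hx => ⟨x, hx, Function.surjInv_eq hsurj x⟩⟩
  have hmap : Subgroup.map (QuotientGroup.mk' N) (closure ((T.image σ : Finset G) : Set G)) = ⊤ := by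
    rw [MonoidHom.map_closure, himg, hTtop]
  have h := Subgroup.comap_map_eq (QuotientGroup.mk' N) (closure ((T.image σ : Finset G) : Set G))
  rw [hmap, Subgroup.comap_top, QuotientGroup.ker_mk'] at h
  exact h.symm

/-- Burnside basis: rank is preserved by the Frattini quotient. -/
lemma RankWreathAux.rank_quotient_frattini (G : Type*) [Group G] [Finite G] :
    Group.rank (G ⧸ frattini G) = Group.rank G := by
  apply le_antisymm
  · exact Group.rank_le_of_surjective _ (QuotientGroup.mk'_surjective _)
  · obtain ⟨S, hS, htop⟩ := RankWreathAux.exists_finset_closure_sup G (frattini G)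
    exact (Group.rank_le (frattini_nongenerating htop)).trans hS

variable {p : ℕ} [Fact p.Prime]

/-- An elementary abelian `p`-group has cardinality at most `p ^ rank`. -/
lemma RankWreathAux.card_le_pow_rank (V : Type*) [Group V] [Finite V]
    (hc : ∀ a b : V, a * b = b * a) (hp : ∀ v : V, v ^ p = 1) :
    Nat.card V ≤ p ^ Group.rank V := by
  classical
  letI : CommGroup V := { ‹Group V› with mul_comm := hc }
  haveI : NeZero p := ⟨(Fact.out : p.Prime).ne_zero⟩
  haveI : Fact (1 < p) := ⟨(Fact.out : p.Prime).one_lt⟩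
  obtain ⟨S, hScard, hStop⟩ := Group.rank_spec V
  set F : (↥S → ZMod p) → V := fun e => ∏ s : ↥S, (s : V) ^ (e s).val with hF
  have hmul : ∀ e e' : ↥S → ZMod p, F e * F e' = F (e + e') := by
    intro e e'
    rw [hF]
    simp only [← Finset.prod_mul_distrib, ← pow_add]
    refine Finset.prod_congr rfl fun s _ => ?_
    have : ((e + e') s).val = ((e s).val + (e' s).val) % p := by
      simp [ZMod.val_add]
    rw [this, ← pow_eq_pow_mod _ (hp (s : V))]
  have key : ∀ v : V, ∃ e, F e = v := by
    intro v
    have hv : v ∈ closure (S : Set V) := hStop ▸ mem_top v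
    induction hv using closure_induction with
    | mem x hx =>
      refine ⟨Pi.single ⟨x, hx⟩ 1, ?_⟩
      rw [hF]; beta_reduce
      rw [Fintype.prod_eq_single (⟨x, hx⟩ : ↥S) (fun t ht => by
        simp [Pi.single_apply, ht])]
      simp [ZMod.val_one]
    | one => exact ⟨0, by simp [hF, ZMod.val_zero]⟩
    | mul x y hx hy ihx ihy =>
      obtain ⟨e, he⟩ := ihx; obtain ⟨e', he'⟩ := ihy
      exact ⟨e + e', by rw [← hmul, he, he']⟩
    | inv x hx ihx =>
      obtain ⟨e, he⟩ := ihx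
      refine ⟨-e, ?_⟩
      have h1 : F e * F (-e) = 1 := by
        rw [hmul]; simp [hF]
      rw [← he]
      exact (inv_eq_of_mul_eq_one_right h1).symm
  have hsurj : Function.Surjective F := fun v => key v
  calc Nat.card V ≤ Nat.card (↥S → ZMod p) := Nat.card_le_card_of_surjective F hsurj
    _ = p ^ S.card := by
        simp [Nat.card_fun, Nat.card_eq_fintype_card, Fintype.card_coe]
    _ = p ^ Group.rank V := by rw [hScard]

/-- An elementary abelian `p`-group has cardinality at least `p ^ rank`. -/
lemma RankWreathAux.pow_rank_le_card_aux :
    ∀ n : ℕ, ∀ (V : Type) [Group V] [Finite V],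
    (∀ a b : V, a * b = b * a) → (∀ v : V, v ^ p = 1) → Nat.card V = n →
    p ^ Group.rank V ≤ Nat.card V := by
  have hp1 : 1 < p := (Fact.out : p.Prime).one_lt
  intro n
  induction n using Nat.strong_induction_on with
  | _ n ih =>
    intro V _ _ hc hp hn
    classical
    by_cases htriv : ∀ v : V, v = 1
    · have h0 : Subgroup.closure ((∅ : Finset V) : Set V) = ⊤ := by
        rw [eq_top_iff']
        intro x
        rw [htriv x]; exact one_mem _
      have hr : Group.rank V ≤ 0 := by simpa using Group.rank_le h0
      rw [Nat.le_zero] at hr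
      rw [hr, pow_zero]
      exact Nat.one_le_iff_ne_zero.mpr (Nat.card_ne_zero.mpr ⟨⟨1⟩, inferInstance⟩)
    · push_neg at htriv
      obtain ⟨v, hv⟩ := htriv
      set Z := Subgroup.zpowers v with hZ
      haveI : Z.Normal := by
        constructor
        intro x hx g
        have : g * x * g⁻¹ = x := by rw [hc g x, mul_assoc, mul_inv_cancel, mul_one]
        rwa [this]
      have hordv : orderOf v = p := by
        have h1 : orderOf v ∣ p := orderOf_dvd_of_pow_eq_one (hp v)
        rcases (Fact.out : p.Prime).eq_one_or_self_of_dvd _ h1 with h | h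
        · exact absurd (orderOf_eq_one_iff.mp h) hv
        · exact h
      have hcardZ : Nat.card Z = p := by rw [hZ, Nat.card_zpowers, hordv]
      have hcardV : Nat.card V = Nat.card (V ⧸ Z) * p := by
        rw [← hcardZ]; exact Subgroup.card_eq_card_quotient_mul_card_subgroup Z
      have hcQ : ∀ a b : V ⧸ Z, a * b = b * a := by
        intro a b
        induction a using QuotientGroup.induction_on
        induction b using QuotientGroup.induction_on
        rw [← QuotientGroup.mk_mul, ← QuotientGroup.mk_mul, hc]
      have hpQ : ∀ q : V ⧸ Z, q ^ p = 1 := by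
        intro q
        induction q using QuotientGroup.induction_on
        rw [← QuotientGroup.mk_pow]
        rw [hp]; rfl
      have hQlt : Nat.card (V ⧸ Z) < n := by
        rw [← hn, hcardV]
        have hpos : 0 < Nat.card (V ⧸ Z) := Nat.card_pos
        exact (Nat.lt_mul_iff_one_lt_right hpos).mpr hp1
      have hQ := ih _ hQlt (V ⧸ Z) hcQ hpQ rfl
      obtain ⟨S, hScard, hStop⟩ := RankWreathAux.exists_finset_closure_sup V Z
      have htop : Subgroup.closure ((insert v S : Finset V) : Set V) = ⊤ := by
        apply top_unique
        rw [← hStop]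
        apply sup_le
        · exact closure_mono (by rw [Finset.coe_insert]; exact Set.subset_insert _ _)
        · rw [hZ, Subgroup.zpowers_le]
          apply Subgroup.subset_closure
          rw [Finset.coe_insert]; exact Set.mem_insert _ _
      have hrank : Group.rank V ≤ S.card + 1 :=
        (Group.rank_le htop).trans (Finset.card_insert_le _ _)
      calc p ^ Group.rank V ≤ p ^ (S.card + 1) :=
            Nat.pow_le_pow_right (Nat.lt_of_lt_of_le Nat.zero_lt_one hp1.le) hrank
        _ ≤ p ^ (Group.rank (V ⧸ Z) + 1) :=
            Nat.pow_le_pow_right (Nat.lt_of_lt_of_le Nat.zero_lt_one hp1.le)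
              (Nat.add_le_add_right hScard 1)
        _ = p ^ Group.rank (V ⧸ Z) * p := pow_succ p _
        _ ≤ Nat.card (V ⧸ Z) * p := Nat.mul_le_mul_right p hQ
        _ = Nat.card V := hcardV.symm

lemma RankWreathAux.pow_rank_le_card (V : Type) [Group V] [Finite V]
    (hc : ∀ a b : V, a * b = b * a) (hp : ∀ v : V, v ^ p = 1) :
    p ^ Group.rank V ≤ Nat.card V :=
  RankWreathAux.pow_rank_le_card_aux (Nat.card V) V hc hp rfl

/-- In a finite `p`-group, every maximal subgroup contains all `p`-th powers and commutators. -/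
lemma RankWreathAux.coatom_facts {G : Type} [Group G] [Finite G] (hG : IsPGroup p G)
    {M : Subgroup G} (hM : IsCoatom M) :
    (∀ x y : G, x * y * x⁻¹ * y⁻¹ ∈ M) ∧ (∀ x : G, x ^ p ∈ M) := by
  haveI : Group.IsNilpotent G := hG.isNilpotent
  have htfae := (isNilpotent_of_finite_tfae (G := G)).out 0 2
  haveI hMn : M.Normal := htfae.mp hG.isNilpotent M hM
  set Q := G ⧸ M with hQdef
  have hQp : IsPGroup p Q := hG.to_quotient M
  obtain ⟨g₀, hg₀⟩ : ∃ q : Q, q ≠ 1 := by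
    obtain ⟨x, hx⟩ := SetLike.exists_of_lt hM.1.lt_top
    exact ⟨QuotientGroup.mk x, fun h => hx.2 ((QuotientGroup.eq_one_iff x).mp h)⟩
  have hsimple : ∀ H : Subgroup Q, H = ⊥ ∨ H = ⊤ := by
    intro H
    have hle : M ≤ Subgroup.comap (QuotientGroup.mk' M) H := by
      intro m hm
      have : QuotientGroup.mk' M m = 1 := by
        rw [← QuotientGroup.ker_mk' M] at hm; exact hm
      rw [Subgroup.mem_comap, this]
      exact one_mem H
    rcases eq_or_lt_of_le hle with heq | hlt
    · left
      have := Subgroup.map_comap_eq_self_of_surjective (QuotientGroup.mk'_surjective M) H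
      rw [← this, ← heq]
      apply le_bot_iff.mp
      intro x hx
      obtain ⟨m, hm, rfl⟩ := hx
      exact (QuotientGroup.eq_one_iff m).mpr hm
    · right
      have htop := hM.2 _ hlt
      have := Subgroup.map_comap_eq_self_of_surjective (QuotientGroup.mk'_surjective M) H
      rw [← this, htop]
      exact Subgroup.map_top_of_surjective _ (QuotientGroup.mk'_surjective M)
  have hgen : Subgroup.zpowers g₀ = ⊤ := by
    rcases hsimple (Subgroup.zpowers g₀) with h | h
    · exact absurd (Subgroup.zpowers_eq_bot.mp h) hg₀
    · exact h
  haveI : Nontrivial Q := ⟨g₀, 1, hg₀⟩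
  have hcard : orderOf g₀ = Nat.card Q := by
    rw [← Nat.card_zpowers, hgen]
    exact Nat.card_congr (Equiv.subtypeUnivEquiv fun x => Subgroup.mem_top x)
  have hone_lt : 1 < orderOf g₀ := by rw [hcard]; exact Finite.one_lt_card
  have hg₀p : g₀ ^ p = 1 := by
    have hlt : orderOf (g₀ ^ p) < orderOf g₀ := by
      obtain ⟨k, hk⟩ := hQp g₀
      have hdvd : orderOf g₀ ∣ p ^ k := orderOf_dvd_of_pow_eq_one hk
      obtain ⟨j, hj, hjo⟩ := (Nat.dvd_prime_pow (Fact.out : p.Prime)).mp hdvd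
      have hj1 : 1 ≤ j := by
        by_contra h
        push_neg at h
        interval_cases j
        simp [hjo] at hone_lt
      rw [orderOf_pow, hjo]
      have hgcd : Nat.gcd (p ^ j) p = p := by
        rw [Nat.gcd_eq_right]
        exact dvd_pow_self p (by omega)
      rw [hgcd]
      apply Nat.div_lt_self (pow_pos (Nat.Prime.pos Fact.out) j)
      exact (Fact.out : p.Prime).one_lt
    rcases hsimple (Subgroup.zpowers (g₀ ^ p)) with h | h
    · exact Subgroup.zpowers_eq_bot.mp h
    · exfalso
      have : orderOf (g₀ ^ p) = Nat.card Q := by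
        rw [← Nat.card_zpowers, h]
        exact Nat.card_congr (Equiv.subtypeUnivEquiv fun x => Subgroup.mem_top x)
      rw [this, ← hcard] at hlt
      exact lt_irrefl _ hlt
  have hQpow : ∀ q : Q, q ^ p = 1 := by
    intro q
    obtain ⟨m, hm⟩ : q ∈ Subgroup.zpowers g₀ := hgen ▸ Subgroup.mem_top q
    rw [← hm, ← zpow_natCast, ← zpow_mul, mul_comm, zpow_mul, zpow_natCast, hg₀p, one_zpow]
  have hQcomm : ∀ a b : Q, a * b = b * a := by
    intro a b
    obtain ⟨m, hm⟩ : a ∈ Subgroup.zpowers g₀ := hgen ▸ Subgroup.mem_top a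
    obtain ⟨l, hl⟩ : b ∈ Subgroup.zpowers g₀ := hgen ▸ Subgroup.mem_top b
    rw [← hm, ← hl, ← zpow_add, ← zpow_add, add_comm]
  constructor
  · intro x y
    rw [← QuotientGroup.eq_one_iff]
    have : ((x * y * x⁻¹ * y⁻¹ : G) : Q)
        = (x : Q) * y * (x : Q)⁻¹ * (y : Q)⁻¹ := by rfl
    rw [this, hQcomm (x : Q) (y : Q)]
    group
  · intro x
    rw [← QuotientGroup.eq_one_iff]
    have : ((x ^ p : G) : Q) = (x : Q) ^ p := rfl
    rw [this, hQpow]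

/-- The Frattini quotient of a finite `p`-group is elementary abelian. -/
lemma RankWreathAux.frattini_quotient_facts {G : Type} [Group G] [Finite G]
    (hG : IsPGroup p G) :
    (∀ a b : G ⧸ frattini G, a * b = b * a) ∧ (∀ q : G ⧸ frattini G, q ^ p = 1) := by
  have hmem : ∀ x : G, (∀ M : Subgroup G, IsCoatom M → x ∈ M) → x ∈ frattini G := by
    intro x h
    show x ∈ ⨅ M ∈ {H : Subgroup G | IsCoatom H}, M
    rw [Subgroup.mem_iInf]
    intro M
    rw [Subgroup.mem_iInf]
    exact h M
  constructor
  · intro a b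
    induction a using QuotientGroup.induction_on with | _ x => ?_
    induction b using QuotientGroup.induction_on with | _ y => ?_
    rw [← QuotientGroup.mk_mul, ← QuotientGroup.mk_mul, QuotientGroup.eq]
    have heq : (x * y)⁻¹ * (y * x) = y⁻¹ * x⁻¹ * (y⁻¹)⁻¹ * (x⁻¹)⁻¹ := by group
    rw [heq]
    exact hmem _ (fun M hM => (RankWreathAux.coatom_facts hG hM).1 y⁻¹ x⁻¹)
  · intro q
    induction q using QuotientGroup.induction_on with | _ x => ?_
    rw [← QuotientGroup.mk_pow, QuotientGroup.eq_one_iff]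
    exact hmem _ (fun M hM => (RankWreathAux.coatom_facts hG hM).2 x)

/-- For finite `p`-groups, `d(A × B) ≥ d(A) + d(B)`. -/
lemma RankWreathAux.rank_add_le_rank_prod (A B : Type) [Group A] [Group B]
    [Finite A] [Finite B] (hA : IsPGroup p A) (hB : IsPGroup p B) :
    Group.rank A + Group.rank B ≤ Group.rank (A × B) := by
  obtain ⟨hcA, hpA⟩ := RankWreathAux.frattini_quotient_facts hA
  obtain ⟨hcB, hpB⟩ := RankWreathAux.frattini_quotient_facts hB
  set QA := A ⧸ frattini A with hQA
  set QB := B ⧸ frattini B with hQB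
  have hsurj : Function.Surjective
      ((QuotientGroup.mk' (frattini A)).prodMap (QuotientGroup.mk' (frattini B))) :=
    (QuotientGroup.mk'_surjective _).prodMap (QuotientGroup.mk'_surjective _)
  have h1 : Group.rank (QA × QB) ≤ Group.rank (A × B) :=
    Group.rank_le_of_surjective _ hsurj
  have hcP : ∀ a b : QA × QB, a * b = b * a := fun a b => Prod.ext (hcA _ _) (hcB _ _)
  have hpP : ∀ v : QA × QB, v ^ p = 1 := fun v =>
    Prod.ext (by rw [Prod.pow_fst, hpA]; rfl) (by rw [Prod.pow_snd, hpB]; rfl)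
  have key : p ^ (Group.rank QA + Group.rank QB) ≤ p ^ Group.rank (QA × QB) := by
    calc p ^ (Group.rank QA + Group.rank QB)
        = p ^ Group.rank QA * p ^ Group.rank QB := pow_add p _ _
      _ ≤ Nat.card QA * Nat.card QB :=
          Nat.mul_le_mul (RankWreathAux.pow_rank_le_card QA hcA hpA)
            (RankWreathAux.pow_rank_le_card QB hcB hpB)
      _ = Nat.card (QA × QB) := (Nat.card_prod _ _).symm
      _ ≤ p ^ Group.rank (QA × QB) := RankWreathAux.card_le_pow_rank _ hcP hpP
  have h2 : Group.rank QA + Group.rank QB ≤ Group.rank (QA × QB) :=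
    (Nat.pow_le_pow_iff_right (Fact.out : p.Prime).one_lt).mp key
  calc Group.rank A + Group.rank B
      = Group.rank QA + Group.rank QB := by
        rw [RankWreathAux.rank_quotient_frattini A, RankWreathAux.rank_quotient_frattini B]
    _ ≤ Group.rank (QA × QB) := h2
    _ ≤ Group.rank (A × B) := h1

/-- Upper bound: `d(A ≀ B) ≤ d(A) + d(B)`. -/
lemma RankWreathAux.rank_wreath_le (A B : Type) [CommGroup A] [Group B]
    [Finite A] [Finite B] :
    Group.rank (Wreath A B) ≤ Group.rank A + Group.rank B := by
  classical
  obtain ⟨SA, hSAcard, hSAtop⟩ := Group.rank_spec A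
  obtain ⟨SB, hSBcard, hSBtop⟩ := Group.rank_spec B
  haveI := Fintype.ofFinite B
  set ι₁ : (B → A) →* Wreath A B := SemidirectProduct.inl with hι₁
  set ι₂ : B →* Wreath A B := SemidirectProduct.inr with hι₂
  set T : Finset (Wreath A B) :=
    SA.image (fun a => ι₁ (Pi.mulSingle 1 a)) ∪ SB.image ι₂ with hT
  set H := Subgroup.closure (T : Set (Wreath A B)) with hH
  have hinr : ∀ b : B, ι₂ b ∈ H := by
    intro b
    have hb : b ∈ Subgroup.closure (SB : Set B) := hSBtop ▸ Subgroup.mem_top b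
    have hmem : ι₂ b ∈ Subgroup.map ι₂ (Subgroup.closure (SB : Set B)) :=
      Subgroup.mem_map_of_mem _ hb
    rw [MonoidHom.map_closure] at hmem
    refine Subgroup.closure_mono ?_ hmem
    intro w hw
    obtain ⟨x, hx, rfl⟩ := hw
    exact Finset.mem_coe.mpr (Finset.mem_union_right _ (Finset.mem_image_of_mem _ hx))
  have hsingle : ∀ (c : B) (a : A), a ∈ SA → ι₁ (Pi.mulSingle c a) ∈ H := by
    intro c a ha
    have h0 : ι₁ (Pi.mulSingle 1 a) ∈ H :=
      Subgroup.subset_closure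
        (Finset.mem_coe.mpr (Finset.mem_union_left _ (Finset.mem_image_of_mem _ ha)))
    have heq : wreathAction A B c⁻¹ (Pi.mulSingle 1 a) = Pi.mulSingle c a := by
      funext x
      have hx : (wreathAction A B c⁻¹) (Pi.mulSingle 1 a) x
          = (Pi.mulSingle (1 : B) a : B → A) (x * c⁻¹) := rfl
      rw [hx]
      simp [Pi.mulSingle_apply, mul_inv_eq_one]
    have key : ι₁ (wreathAction A B c⁻¹ (Pi.mulSingle 1 a)) ∈ H := by
      rw [hι₁, SemidirectProduct.inl_aut]
      exact mul_mem (mul_mem (hinr _) h0) (hinr _)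
    rwa [heq] at key
  have hinl : ∀ f : B → A, ι₁ f ∈ H := by
    have hall : ∀ (c : B) (a : A), ι₁ (Pi.mulSingle c a) ∈ H := by
      intro c a
      have ha : a ∈ Subgroup.closure (SA : Set A) := hSAtop ▸ Subgroup.mem_top a
      have hL : Subgroup.closure (SA : Set A) ≤
          Subgroup.comap (ι₁.comp (MonoidHom.mulSingle (fun _ : B => A) c)) H :=
        (Subgroup.closure_le _).mpr (fun x hx => hsingle c x hx)
      exact hL ha
    intro f
    have hf : f = ∏ c : B, Pi.mulSingle c (f c) := by
      funext x
      rw [Finset.prod_apply]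
      exact (Fintype.prod_pi_mulSingle x f).symm
    have hK : f ∈ Subgroup.comap ι₁ H := by
      rw [hf]
      exact Subgroup.prod_mem _ (fun c _ => Subgroup.mem_comap.mpr (hall c (f c)))
    exact hK
  have htop : Subgroup.closure (T : Set (Wreath A B)) = ⊤ := by
    rw [← hH, eq_top_iff']
    intro w
    rw [← SemidirectProduct.inl_left_mul_inr_right w]
    exact mul_mem (hinl _) (hinr _)
  refine (Group.rank_le htop).trans ?_
  calc T.card ≤ (SA.image (fun a => ι₁ (Pi.mulSingle 1 a))).card + (SB.image ι₂).card :=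
        Finset.card_union_le _ _
    _ ≤ SA.card + SB.card := add_le_add Finset.card_image_le Finset.card_image_le
    _ = Group.rank A + Group.rank B := by rw [hSAcard, hSBcard]

/-- Lower bound: the wreath product surjects onto `A × B`. -/
lemma RankWreathAux.rank_prod_le_wreath (A B : Type) [CommGroup A] [Group B]
    [Finite A] [Finite B] :
    Group.rank (A × B) ≤ Group.rank (Wreath A B) := by
  classical
  haveI := Fintype.ofFinite B
  set P : (B → A) →* A :=
    { toFun := fun f => ∏ x, f x
      map_one' := by simp
      map_mul' := fun f g => by simp [Finset.prod_mul_distrib] } with hP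
  set F₁ : (B → A) →* A × B := (MonoidHom.inl A B).comp P with hF₁
  set F₂ : B →* A × B := MonoidHom.inr A B with hF₂
  have hcompat : ∀ b : B,
      F₁.comp (wreathAction A B b).toMonoidHom =
        (MulAut.conj (F₂ b)).toMonoidHom.comp F₁ := by
    intro b
    ext f
    · show ∏ x, f (x * b) = ((MulAut.conj (F₂ b)) (F₁ f)).1
      have h1 : ((MulAut.conj (F₂ b)) (F₁ f)).1 = ∏ x, f x := by
        simp [hF₁, hF₂, MulAut.conj_apply, hP]
      rw [h1]
      exact Fintype.prod_equiv (Equiv.mulRight b) _ _ (fun x => rfl)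
    · simp [hF₁, hF₂, MulAut.conj_apply]
  set π := SemidirectProduct.lift F₁ F₂ hcompat with hπ
  have hsurj : Function.Surjective π := by
    rintro ⟨a, b⟩
    refine ⟨SemidirectProduct.inl (Pi.mulSingle 1 a) * SemidirectProduct.inr b, ?_⟩
    rw [map_mul, hπ, SemidirectProduct.lift_inl, SemidirectProduct.lift_inr]
    have h1 : F₁ (Pi.mulSingle 1 a) = (a, 1) := by
      have : P (Pi.mulSingle 1 a) = a := Fintype.prod_pi_mulSingle' 1 a
      simp [hF₁, this]
    rw [h1, hF₂]
    ext <;> simp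
  exact Group.rank_le_of_surjective π hsurj

end Aux

/-- For finite `p`-groups `A`, `B` with `A` abelian,
`d(A ≀ B) = d(A) + d(B)`. -/
theorem rank_wreath (p : ℕ) [Fact p.Prime] (A B : Type) [CommGroup A] [Group B]
    [Finite A] [Finite B] (hA : IsPGroup p A) (hB : IsPGroup p B) :
    Group.rank (Wreath A B) = Group.rank A + Group.rank B := by
  apply le_antisymm
  · exact RankWreathAux.rank_wreath_le A B
  · exact le_trans (RankWreathAux.rank_add_le_rank_prod A B hA hB)
      (RankWreathAux.rank_prod_le_wreath A B)
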